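/- Let G be a simple graph and F a field. Then the isotropic 2-matroid Z₂(G) is representable over F if and only if Z₂(G) is strictly representable over F. -/

import Mathlib

open Matrix

noncomputable section

/-- The rank over `F` of the set of columns of `M` indexed by `S`. -/
def colSpanRank (F : Type*) [Field F] {m n : Type*} (M : Matrix m n F) (S : Set n) : ℕ :=
  Module.finrank F ↥(Submodule.span F ((fun j i => M i j) '' S))

/-- A subtransversal of `W₂(G) = V × {φ,χ}`: at most one element of each pair. -/
def Subtransversal2 {V : Type*} (S : Set (V × Fin 2)) : Prop :=
  ∀ v i j, (v, i) ∈ S → (v, j) ∈ S → i = j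

/-- The matrix `IA(G) = (I | A)` over GF(2); the columns `(v,0)` and `(v,1)` are
`φ_G(v)` and `χ_G(v)` respectively. -/
def IAmat {V : Type*} [DecidableEq V] (A : Matrix V V (ZMod 2)) :
    Matrix V (V × Fin 2) (ZMod 2) :=
  Matrix.of fun v p => if p.2 = 0 then (if v = p.1 then 1 else 0) else A v p.1

/-- The isotropic 2-matroid `Z₂(G)` is representable over `F`. -/
def Z2Rep (F : Type*) [Field F] {V : Type*} [Fintype V] [DecidableEq V]
    (A : Matrix V V (ZMod 2)) : Prop :=
  ∃ (k : ℕ) (P : Matrix (Fin k) (V × Fin 2) F),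
    ∀ S : Set (V × Fin 2), Subtransversal2 S →
      colSpanRank F P S = colSpanRank (ZMod 2) (IAmat A) S

/-- `Z₂(G)` is strictly representable over `F`: the sheltering matroid has rank `|V(G)|`. -/
def Z2RepStrict (F : Type*) [Field F] {V : Type*} [Fintype V] [DecidableEq V]
    (A : Matrix V V (ZMod 2)) : Prop :=
  ∃ (k : ℕ) (P : Matrix (Fin k) (V × Fin 2) F),
    P.rank = Fintype.card V ∧
    ∀ S : Set (V × Fin 2), Subtransversal2 S →
      colSpanRank F P S = colSpanRank (ZMod 2) (IAmat A) S

section AuxZ2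

variable {V : Type} [Fintype V] [DecidableEq V]

/-- The set of all φ-columns. -/
def phiSet (V : Type) : Set (V × Fin 2) := {p | p.2 = 0}

/-- All φ-columns except that of `v`, together with the χ-column of `v`. -/
def chiSet (v : V) : Set (V × Fin 2) := insert (v, 1) (phiSet V \ {(v, 0)})

lemma sub_phiSet : Subtransversal2 (phiSet V) := by
  intro v i j hi hj
  exact hi.trans hj.symm

lemma sub_phiSet_diff (v : V) : Subtransversal2 (phiSet V \ {(v, 0)}) := by
  intro w i j hi hj
  exact hi.1.trans hj.1.symm

lemma mem_chiSet_eq (v w : V) (m : Fin 2) (hm : (w, m) ∈ chiSet v) :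
    m = if w = v then 1 else 0 := by
  rcases hm with hm | hm
  · rw [Prod.ext_iff] at hm
    rw [if_pos hm.1]
    exact hm.2
  · have h0 : m = 0 := hm.1
    have : w ≠ v := by
      intro h
      exact hm.2 (by simp [h, h0])
    rw [if_neg this]
    exact h0

lemma sub_chiSet (v : V) : Subtransversal2 (chiSet v) := by
  intro w i j hi hj
  rw [mem_chiSet_eq v w i hi, mem_chiSet_eq v w j hj]

lemma IA_col_phi (A : Matrix V V (ZMod 2)) (w : V) :
    (fun u => IAmat A u (w, 0)) = Pi.single w (1 : ZMod 2) := by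
  funext u
  simp [IAmat, Pi.single_apply]

lemma IA_col_chi (A : Matrix V V (ZMod 2)) (v : V) :
    (fun u => IAmat A u (v, (1 : Fin 2))) = fun u => A u v := by
  funext u
  simp [IAmat]

/-- The span of the φ-columns of `IA(G)` is everything. -/
lemma span_IA_phi_top (A : Matrix V V (ZMod 2)) :
    Submodule.span (ZMod 2) ((fun j u => IAmat A u j) '' phiSet V) = ⊤ := by
  refine le_antisymm le_top ?_
  rw [← (Pi.basisFun (ZMod 2) V).span_eq]
  refine Submodule.span_mono ?_
  rintro _ ⟨w, rfl⟩
  refine ⟨(w, 0), rfl, ?_⟩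
  rw [Pi.basisFun_apply]
  exact IA_col_phi A w

lemma colSpanRank_IA_phi (A : Matrix V V (ZMod 2)) :
    colSpanRank (ZMod 2) (IAmat A) (phiSet V) = Fintype.card V := by
  rw [colSpanRank]
  rw [show ((fun j i => IAmat A i j) '' phiSet V) = ((fun j u => IAmat A u j) '' phiSet V) from rfl]
  rw [span_IA_phi_top A, finrank_top]
  exact Module.finrank_fintype_fun_eq_card (ZMod 2)

/-- Over GF(2), since `A v v = 0`, the χ-column of `v` lies in the span of the
φ-columns other than that of `v`. -/
lemma span_IA_chiSet (A : Matrix V V (ZMod 2)) (hdiag : ∀ v, A v v = 0) (v : V) :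
    Submodule.span (ZMod 2) ((fun j u => IAmat A u j) '' chiSet v) =
      Submodule.span (ZMod 2) ((fun j u => IAmat A u j) '' (phiSet V \ {(v, 0)})) := by
  rw [chiSet, Set.image_insert_eq]
  refine Submodule.span_insert_eq_span ?_
  have hrepr : (fun u => IAmat A u (v, (1 : Fin 2))) = ∑ w : V, A w v • Pi.single w (1 : ZMod 2) := by
    rw [IA_col_chi]
    funext u
    simp only [Finset.sum_apply, Pi.smul_apply, Pi.single_apply, smul_eq_mul, mul_ite,
      mul_one, mul_zero]
    simp
  rw [hrepr]
  refine Submodule.sum_mem _ fun w _ => ?_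
  by_cases hw : w = v
  · subst hw
    rw [hdiag w, zero_smul]
    exact zero_mem _
  · refine Submodule.smul_mem _ _ (Submodule.subset_span ?_)
    refine ⟨(w, 0), ⟨rfl, ?_⟩, IA_col_phi A w⟩
    simp [hw]

lemma colSpanRank_IA_chiSet (A : Matrix V V (ZMod 2)) (hdiag : ∀ v, A v v = 0) (v : V) :
    colSpanRank (ZMod 2) (IAmat A) (chiSet v) =
      colSpanRank (ZMod 2) (IAmat A) (phiSet V \ {(v, 0)}) := by
  rw [colSpanRank, colSpanRank]
  rw [show ∀ S : Set (V × Fin 2), ((fun j i => IAmat A i j) '' S) = ((fun j u => IAmat A u j) '' S)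
    from fun _ => rfl, show ∀ S : Set (V × Fin 2),
      ((fun j i => IAmat A i j) '' S) = ((fun j u => IAmat A u j) '' S) from fun _ => rfl]
  rw [span_IA_chiSet A hdiag v]

end AuxZ2

/-- For a simple graph `G`, `Z₂(G)` is representable over `F` if and only if it is
strictly representable over `F`. -/
theorem Z2_representable_iff_strictly
    {V : Type} [Fintype V] [DecidableEq V] (A : Matrix V V (ZMod 2))
    (hsym : A.IsSymm) (hdiag : ∀ v, A v v = 0) (F : Type) [Field F] :
    Z2Rep F A ↔ Z2RepStrict F A := by
  constructor
  · rintro ⟨k, P, hP⟩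
    refine ⟨k, P, ?_, hP⟩
    -- U is the span of the φ-columns of P
    set U : Submodule F (Fin k → F) := Submodule.span F ((fun j i => P i j) '' phiSet V) with hU
    have hUrank : Module.finrank F U = Fintype.card V := by
      rw [hU, show Module.finrank F ↥(Submodule.span F ((fun j i => P i j) '' phiSet V)) =
        colSpanRank F P (phiSet V) from rfl, hP _ sub_phiSet, colSpanRank_IA_phi]
    -- each χ-column of P lies in U
    have hchi : ∀ v : V, (fun i => P i (v, 1)) ∈ U := by
      intro v
      have hle : Submodule.span F ((fun j i => P i j) '' (phiSet V \ {(v, 0)})) ≤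
          Submodule.span F ((fun j i => P i j) '' chiSet v) :=
        Submodule.span_mono (Set.image_mono (Set.subset_insert _ _))
      have heq : Submodule.span F ((fun j i => P i j) '' (phiSet V \ {(v, 0)})) =
          Submodule.span F ((fun j i => P i j) '' chiSet v) := by
        refine Submodule.eq_of_le_of_finrank_le hle ?_
        have h1 : colSpanRank F P (chiSet v) = colSpanRank F P (phiSet V \ {(v, 0)}) := by
          rw [hP _ (sub_chiSet v), hP _ (sub_phiSet_diff v), colSpanRank_IA_chiSet A hdiag v]
        exact le_of_eq h1
      have hmem : (fun i => P i (v, 1)) ∈ Submodule.span F ((fun j i => P i j) '' chiSet v) :=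
        Submodule.subset_span ⟨(v, 1), Set.mem_insert _ _, rfl⟩
      rw [← heq] at hmem
      exact Submodule.span_mono (Set.image_mono Set.diff_subset) hmem
    -- hence the full column span equals U
    have hcols : Submodule.span F (Set.range Pᵀ) = U := by
      refine le_antisymm ?_ (Submodule.span_mono ?_)
      · rw [Submodule.span_le]
        rintro _ ⟨⟨v, m⟩, rfl⟩
        fin_cases m
        · exact Submodule.subset_span ⟨(v, 0), rfl, rfl⟩
        · exact hchi v
      · rintro _ ⟨p, _, rfl⟩
        exact ⟨p, rfl⟩
    rw [Matrix.rank_eq_finrank_span_cols, show Set.range P.col = Set.range Pᵀ from rfl, hcols, hUrank]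
  · rintro ⟨k, P, _, hP⟩
    exact ⟨k, P, hP⟩

end
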